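/- For all λ > 0, δ > 0 and x > 0, ∫₀^x e^{λ·a}/(1 + δ·a) da ≥ (log(1 + δ·x)/δ) · exp(λ·x/log(1 + δ·x) − λ/δ). -/

import Mathlib

/-- Jensen-type inequality: for `λ, δ, x > 0`,
`∫₀^x e^{λa}/(1 + δa) da ≥ (log(1 + δx)/δ) · exp(λx/log(1 + δx) − λ/δ)`. -/
theorem stmt17 (lam δ x : ℝ) (hlam : 0 < lam) (hδ : 0 < δ) (hx : 0 < x) :
    (Real.log (1 + δ * x) / δ) * Real.exp (lam * x / Real.log (1 + δ * x) - lam / δ) ≤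
      ∫ a in (0:ℝ)..x, Real.exp (lam * a) / (1 + δ * a) := by
  set L := Real.log (1 + δ * x) with hLdef
  have h1x : (1:ℝ) < 1 + δ * x := by nlinarith
  have hL : 0 < L := Real.log_pos h1x
  set c := lam * x / L - lam / δ with hcdef
  have huIcc : Set.uIcc (0:ℝ) x = Set.Icc 0 x := Set.uIcc_of_le hx.le
  have hpos : ∀ a ∈ Set.uIcc (0:ℝ) x, 0 < 1 + δ * a := by
    intro a ha
    rw [huIcc] at ha
    nlinarith [ha.1]
  -- continuity / integrability
  have hcont : ∀ (k m : ℝ), ContinuousOn (fun a => (k + m * a) / (1 + δ * a)) (Set.uIcc 0 x) := by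
    intro k m
    apply ContinuousOn.div (by fun_prop) (by fun_prop)
    intro a ha
    exact (hpos a ha).ne'
  have hint1 : IntervalIntegrable (fun a => Real.exp (lam * a) / (1 + δ * a))
      MeasureTheory.volume 0 x := by
    apply ContinuousOn.intervalIntegrable
    apply ContinuousOn.div (by fun_prop) (by fun_prop)
    intro a ha
    exact (hpos a ha).ne'
  have hint2 : IntervalIntegrable (fun a => Real.exp c * ((1 + lam * a - c) / (1 + δ * a)))
      MeasureTheory.volume 0 x := by
    apply ContinuousOn.intervalIntegrable
    have : ContinuousOn (fun a => Real.exp c * ((1 - c + lam * a) / (1 + δ * a))) (Set.uIcc 0 x) :=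
      (continuousOn_const (c := Real.exp c)).mul (hcont (1 - c) lam)
    convert this using 2 with a
    ring
  -- FTC for the auxiliary integral
  have hftc : (∫ a in (0:ℝ)..x, (1 + lam * a - c) / (1 + δ * a)) =
      ((1 - c) * Real.log (1 + δ * x) / δ + lam * (x / δ - Real.log (1 + δ * x) / δ ^ 2)) -
      ((1 - c) * Real.log (1 + δ * 0) / δ + lam * (0 / δ - Real.log (1 + δ * 0) / δ ^ 2)) := by
    apply intervalIntegral.integral_eq_sub_of_hasDerivAt
    · intro a ha
      have hpa : 0 < 1 + δ * a := hpos a ha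
      have hd1 : HasDerivAt (fun a : ℝ => 1 + δ * a) δ a := by
        simpa using ((hasDerivAt_id a).const_mul δ).const_add 1
      have hlog : HasDerivAt (fun a : ℝ => Real.log (1 + δ * a)) (δ / (1 + δ * a)) a :=
        hd1.log hpa.ne'
      have h2 : HasDerivAt (fun a : ℝ => (1 - c) * Real.log (1 + δ * a) / δ +
          lam * (a / δ - Real.log (1 + δ * a) / δ ^ 2))
          ((1 - c) * (δ / (1 + δ * a)) / δ + lam * (1 / δ - (δ / (1 + δ * a)) / δ ^ 2)) a := by
        exact ((hlog.const_mul (1 - c)).div_const δ).add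
          ((((hasDerivAt_id a).div_const δ).sub (hlog.div_const (δ ^ 2))).const_mul lam)
      refine h2.congr_deriv ?_
      have hpa' := hpa.ne'
      have hδ' := hδ.ne'
      field_simp
      ring
    · have := hcont (1 - c) lam
      apply ContinuousOn.intervalIntegrable
      convert this using 2 with a
      ring
  -- the pointwise tangent-line bound
  have hmono : (∫ a in (0:ℝ)..x, Real.exp c * ((1 + lam * a - c) / (1 + δ * a))) ≤
      ∫ a in (0:ℝ)..x, Real.exp (lam * a) / (1 + δ * a) := by
    apply intervalIntegral.integral_mono_on hx.le hint2 hint1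
    intro a ha
    have hpa : 0 < 1 + δ * a := by nlinarith [ha.1]
    rw [mul_div_assoc']
    gcongr
    have h := Real.add_one_le_exp (lam * a - c)
    calc Real.exp c * (1 + lam * a - c) ≤ Real.exp c * Real.exp (lam * a - c) := by
          apply mul_le_mul_of_nonneg_left _ (Real.exp_pos c).le
          linarith
      _ = Real.exp (lam * a) := by rw [← Real.exp_add]; ring_nf
  refine le_trans (le_of_eq ?_) hmono
  rw [intervalIntegral.integral_const_mul, hftc]
  simp only [mul_zero, Real.log_one, zero_div, add_zero, mul_zero, sub_zero, zero_sub]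
  rw [← hLdef]
  have hLne : L ≠ 0 := hL.ne'
  have hδne : δ ≠ 0 := hδ.ne'
  rw [hcdef]
  field_simp
  ring
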